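/- Let r_Y, r_T > 1 be target values for the sensitivity parameters RR_{UY|S=1} and RR_{TU|S=1}, and let π ∈ (0,1), p₀, p₁ ∈ (0,1) be target observed quantities. Then there exists a joint distribution of (Y, T, U) with Y, T valued in {0,1} and U valued in {0,1,2} (representing the subpopulation with I_S = 1), with all conditioning events of positive probability, such that: (i) P(T=1) = π; (ii) P(Y=1|T=t) = p_t for t = 0,1; and (iii) RR_{UY|S=1} = r_Y and RR_{TU|S=1} = r_T. In particular, the two sensitivity parameters are variation independent: they are not restricted by each other or by the observed distribution of (Y,T) in the subpopulation. -/

import Mathlib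

open Finset

namespace Stmt4

/- `P y t u` is the joint pmf of `(Y, T, U)` within the selected
subpopulation (`I_S = 1`), with `Y, T` Boolean and `U` valued in `Fin 3`. -/
variable (P : Bool → Bool → Fin 3 → ℝ)

/-- `P(T = t | I_S = 1)`. -/
noncomputable def mT (t : Bool) : ℝ := ∑ y : Bool, ∑ u : Fin 3, P y t u

/-- `P(T = t, U = u | I_S = 1)`. -/
noncomputable def mTU (t : Bool) (u : Fin 3) : ℝ := ∑ y : Bool, P y t u

/-- `P(Y = 1 | T = t, I_S = 1)`. -/
noncomputable def pY1gT (t : Bool) : ℝ := (∑ u : Fin 3, P true t u) / mT P t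

/-- `P(Y = 1 | T = t, U = u, I_S = 1)`. -/
noncomputable def pY1gTU (t : Bool) (u : Fin 3) : ℝ := P true t u / mTU P t u

/-- `P(U = u | T = t, I_S = 1)`. -/
noncomputable def pUgT (t : Bool) (u : Fin 3) : ℝ := mTU P t u / mT P t

end Stmt4

open Stmt4

lemma sup3 (f : Fin 3 → ℝ) :
    univ.sup' univ_nonempty f = max (max (f 0) (f 1)) (f 2) := by
  apply le_antisymm
  · exact Finset.sup'_le _ _ (by intro i _; fin_cases i <;> simp [le_max_iff, le_refl])
  · exact max_le (max_le (Finset.le_sup' f (mem_univ _)) (Finset.le_sup' f (mem_univ _)))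
      (Finset.le_sup' f (mem_univ _))

lemma inf3 (f : Fin 3 → ℝ) :
    univ.inf' univ_nonempty f = min (min (f 0) (f 1)) (f 2) := by
  apply le_antisymm
  · exact le_min (le_min (Finset.inf'_le f (mem_univ _)) (Finset.inf'_le f (mem_univ _)))
      (Finset.inf'_le f (mem_univ _))
  · exact Finset.le_inf' _ _ (by intro i _; fin_cases i <;> simp [min_le_iff, le_refl])

open Stmt4 in
/-- Variation independence of the sensitivity parameters for the subpopulation:
for any targets `r_Y, r_T > 1` and observed quantities `π, p₀, p₁ ∈ (0,1)`, there
is a joint distribution of `(Y, T, U)` with `U` valued in `{0, 1, 2}`, all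
conditioning events of positive probability, with `P(T=1) = π`,
`P(Y=1|T=t) = p_t`, `RR_{UY|S=1} = r_Y` and `RR_{TU|S=1} = r_T`. -/
theorem stmt4 (rY rT π p₀ p₁ : ℝ) (hrY : 1 < rY) (hrT : 1 < rT)
    (hπ : π ∈ Set.Ioo (0 : ℝ) 1) (hp₀ : p₀ ∈ Set.Ioo (0 : ℝ) 1)
    (hp₁ : p₁ ∈ Set.Ioo (0 : ℝ) 1) :
    ∃ P : Bool → Bool → Fin 3 → ℝ,
      (∀ y t u, 0 ≤ P y t u) ∧
      (∑ y : Bool, ∑ t : Bool, ∑ u : Fin 3, P y t u = 1) ∧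
      (∀ t, 0 < mT P t) ∧ (∀ t u, 0 < mTU P t u) ∧
      -- (i) P(T = 1) = π
      mT P true = π ∧
      -- (ii) P(Y = 1 | T = t) = p_t
      pY1gT P false = p₀ ∧ pY1gT P true = p₁ ∧
      -- (iii) RR_{UY|S=1} = r_Y and RR_{TU|S=1} = r_T
      max
        ((univ.sup' univ_nonempty (pY1gTU P true)) /
          (univ.inf' univ_nonempty (pY1gTU P true)))
        ((univ.sup' univ_nonempty (pY1gTU P false)) /
          (univ.inf' univ_nonempty (pY1gTU P false))) = rY ∧
      univ.sup' univ_nonempty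
        (fun u : Fin 3 => pUgT P true u / pUgT P false u) = rT := by
  obtain ⟨hπ0, hπ1⟩ := hπ
  obtain ⟨hq0, hq1⟩ := hp₀
  obtain ⟨hr0, hr1⟩ := hp₁
  have hrY0 : (0:ℝ) < rY := by linarith
  have hrT0 : (0:ℝ) < rT := by linarith
  set h : ℝ := (p₁ + min 1 (p₁ * rY)) / 2 with hhdef
  have hm0 : 0 < min 1 (p₁ * rY) := lt_min one_pos (by positivity)
  have hmle : min 1 (p₁ * rY) ≤ 1 := min_le_left _ _
  have hplt : p₁ < min 1 (p₁ * rY) := lt_min hr1 (by nlinarith)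
  have hh0 : 0 < h := by rw [hhdef]; linarith
  have hph : p₁ < h := by rw [hhdef]; linarith
  have hh1 : h < 1 := by rw [hhdef]; linarith
  have hhpr : h < p₁ * rY := by
    have h2 := min_le_right 1 (p₁ * rY)
    have h3 : p₁ < p₁ * rY := by nlinarith
    rw [hhdef]; linarith
  clear_value h
  set l : ℝ := h / rY with hldef
  have hl0 : 0 < l := by rw [hldef]; positivity
  have hlp : l < p₁ := by rw [hldef, div_lt_iff₀ hrY0]; linarith
  clear_value l
  have hlh : l < h := lt_trans hlp hph
  have hl1 : l < 1 := lt_trans hlp hr1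
  have hhl : (2:ℝ) * (h - l) ≠ 0 := by
    have : (0:ℝ) < h - l := by linarith
    positivity
  set w0 : ℝ := (h - p₁) / (2 * (h - l)) with hw0def
  set w1 : ℝ := (p₁ - l) / (2 * (h - l)) with hw1def
  have hw0 : 0 < w0 := by rw [hw0def]; apply div_pos <;> linarith
  have hw1 : 0 < w1 := by rw [hw1def]; apply div_pos <;> linarith
  have hwsum : w0 + w1 = 1/2 := by
    rw [hw0def, hw1def, ← add_div,
      show h - p₁ + (p₁ - l) = h - l by ring,
      show (2:ℝ) * (h - l) = (h - l) * 2 by ring, ← div_div,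
      div_self (by intro hc; apply hhl; rw [show h - l = 0 from hc]; ring)]
  have hmean : w0 * l + w1 * h = p₁ / 2 := by
    rw [hw0def, hw1def, div_mul_eq_mul_div, div_mul_eq_mul_div, ← add_div,
      div_eq_div_iff hhl two_ne_zero]
    ring
  clear_value w0 w1
  set κ : ℝ := (2*rT - 1)/rT with hκdef
  have hκ0 : 0 < κ := by rw [hκdef]; apply div_pos <;> linarith
  have hκrT : κ * rT = 2*rT - 1 := by rw [hκdef]; field_simp
  clear_value κ
  set B : Fin 3 → ℝ := fun u => if u = 0 then w0 else if u = 1 then w1 else 1/2 with hBdef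
  set A : Fin 3 → ℝ := fun u => if u = 0 then κ*w0 else if u = 1 then κ*w1 else 1/(2*rT)
    with hAdef
  set Q : Fin 3 → ℝ := fun u => if u = 0 then l else if u = 1 then h else p₁ with hQdef
  have hB0 : B 0 = w0 := by simp [hBdef]
  have hB1 : B 1 = w1 := by simp only [hBdef]; rw [if_neg (by decide)]; simp
  have hB2 : B 2 = 1/2 := by simp only [hBdef]; rw [if_neg (by decide), if_neg (by decide)]
  have hA0 : A 0 = κ*w0 := by simp [hAdef]
  have hA1 : A 1 = κ*w1 := by simp only [hAdef]; rw [if_neg (by decide)]; simp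
  have hA2 : A 2 = 1/(2*rT) := by
    simp only [hAdef]; rw [if_neg (by decide), if_neg (by decide)]
  have hQ0 : Q 0 = l := by simp [hQdef]
  have hQ1 : Q 1 = h := by simp only [hQdef]; rw [if_neg (by decide)]; simp
  have hQ2 : Q 2 = p₁ := by simp only [hQdef]; rw [if_neg (by decide), if_neg (by decide)]
  have hBpos : ∀ u, 0 < B u := by
    intro u; fin_cases u <;> simp [hBdef] <;> linarith
  have hApos : ∀ u, 0 < A u := by
    intro u; fin_cases u <;> simp [hAdef] <;> positivity
  have hQpos : ∀ u, 0 < Q u := by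
    intro u; fin_cases u <;> simp [hQdef] <;> linarith
  have hQlt1 : ∀ u, Q u < 1 := by
    intro u; fin_cases u <;> simp [hQdef] <;> linarith
  clear_value B A Q
  set P : Bool → Bool → Fin 3 → ℝ := fun y t u =>
    if t then π * B u * (if y then Q u else 1 - Q u)
    else (1-π) * A u * (if y then p₀ else 1 - p₀) with hPdef
  have hPff : ∀ u, P false false u = (1-π) * A u * (1 - p₀) := by intro u; simp [hPdef]
  have hPtf : ∀ u, P true false u = (1-π) * A u * p₀ := by intro u; simp [hPdef]
  have hPft : ∀ u, P false true u = π * B u * (1 - Q u) := by intro u; simp [hPdef]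
  have hPtt : ∀ u, P true true u = π * B u * Q u := by intro u; simp [hPdef]
  clear_value P
  have hPpos : ∀ y t u, 0 < P y t u := by
    intro y t u
    have h1 := hBpos u; have h2 := hApos u; have h3 := hQpos u; have h4 := hQlt1 u
    cases t <;> cases y
    · rw [hPff]; exact mul_pos (mul_pos (by linarith) h2) (by linarith)
    · rw [hPtf]; exact mul_pos (mul_pos (by linarith) h2) hq0
    · rw [hPft]; exact mul_pos (mul_pos hπ0 h1) (by linarith)
    · rw [hPtt]; exact mul_pos (mul_pos hπ0 h1) h3
  have hAsum : A 0 + A 1 + A 2 = 1 := by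
    rw [hA0, hA1, hA2]
    field_simp
    linear_combination 2*rT*κ*hwsum + hκrT
  have hBsum : B 0 + B 1 + B 2 = 1 := by rw [hB0, hB1, hB2]; linarith
  have hmT1 : mT P true = π := by
    simp only [mT, Fintype.sum_bool, Fin.sum_univ_three, hPtt, hPft]
    linear_combination π * hBsum
  have hmT0 : mT P false = 1 - π := by
    simp only [mT, Fintype.sum_bool, Fin.sum_univ_three, hPtf, hPff]
    linear_combination (1-π) * hAsum
  have hmTU1 : ∀ u, mTU P true u = π * B u := by
    intro u
    simp only [mTU, Fintype.sum_bool, hPtt, hPft]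
    ring
  have hmTU0 : ∀ u, mTU P false u = (1-π) * A u := by
    intro u
    simp only [mTU, Fintype.sum_bool, hPtf, hPff]
    ring
  have hYTU1 : ∀ u, pY1gTU P true u = Q u := by
    intro u
    rw [pY1gTU, hPtt, hmTU1]
    exact mul_div_cancel_left₀ _ (ne_of_gt (mul_pos hπ0 (hBpos u)))
  have hYTU0 : ∀ u, pY1gTU P false u = p₀ := by
    intro u
    rw [pY1gTU, hPtf, hmTU0]
    exact mul_div_cancel_left₀ _ (ne_of_gt (mul_pos (by linarith) (hApos u)))
  have hUgT1 : ∀ u, pUgT P true u = B u := by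
    intro u
    rw [pUgT, hmTU1, hmT1]
    exact mul_div_cancel_left₀ _ (ne_of_gt hπ0)
  have hUgT0 : ∀ u, pUgT P false u = A u := by
    intro u
    rw [pUgT, hmTU0, hmT0]
    exact mul_div_cancel_left₀ _ (by linarith)
  refine ⟨P, fun y t u => le_of_lt (hPpos y t u), ?_, ?_, ?_, hmT1, ?_, ?_, ?_, ?_⟩
  · -- total mass 1
    have e1 : (∑ t : Bool, ∑ u : Fin 3, P true t u) + ∑ t : Bool, ∑ u : Fin 3, P false t u
        = mT P true + mT P false := by
      simp only [mT, Fintype.sum_bool]; ring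
    rw [Fintype.sum_bool, e1, hmT1, hmT0]
    ring
  · intro t; cases t
    · rw [hmT0]; linarith
    · rw [hmT1]; linarith
  · intro t u; cases t
    · rw [hmTU0]; exact mul_pos (by linarith) (hApos u)
    · rw [hmTU1]; exact mul_pos hπ0 (hBpos u)
  · -- pY1gT false = p₀
    rw [pY1gT, hmT0, Fin.sum_univ_three, hPtf 0, hPtf 1, hPtf 2,
      show (1-π) * A 0 * p₀ + (1-π) * A 1 * p₀ + (1-π) * A 2 * p₀
        = (1-π) * ((A 0 + A 1 + A 2) * p₀) by ring, hAsum, one_mul]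
    exact mul_div_cancel_left₀ _ (by linarith)
  · -- pY1gT true = p₁
    rw [pY1gT, hmT1, Fin.sum_univ_three, hPtt 0, hPtt 1, hPtt 2, hB0, hB1, hB2,
      hQ0, hQ1, hQ2,
      show π * w0 * l + π * w1 * h + π * (1/2) * p₁
        = π * ((w0 * l + w1 * h) + (1/2) * p₁) by ring, hmean,
      show p₁ / 2 + (1/2) * p₁ = p₁ by ring]
    exact mul_div_cancel_left₀ _ (ne_of_gt hπ0)
  · -- RR_UY = rY
    have hs1 : univ.sup' univ_nonempty (pY1gTU P true) = h := by
      rw [sup3, hYTU1, hYTU1, hYTU1, hQ0, hQ1, hQ2,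
        max_eq_right (le_of_lt hlh), max_eq_left (le_of_lt hph)]
    have hi1 : univ.inf' univ_nonempty (pY1gTU P true) = l := by
      rw [inf3, hYTU1, hYTU1, hYTU1, hQ0, hQ1, hQ2,
        min_eq_left (le_of_lt hlh), min_eq_left (le_of_lt hlp)]
    have hs0 : univ.sup' univ_nonempty (pY1gTU P false) = p₀ := by
      rw [sup3, hYTU0, hYTU0, hYTU0, max_self, max_self]
    have hi0 : univ.inf' univ_nonempty (pY1gTU P false) = p₀ := by
      rw [inf3, hYTU0, hYTU0, hYTU0, min_self, min_self]
    have hq : h / l = rY := by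
      rw [hldef, div_div_eq_mul_div, mul_comm, mul_div_assoc, div_self (ne_of_gt hh0),
        mul_one]
    rw [hs1, hi1, hs0, hi0, div_self (ne_of_gt hq0), hq, max_eq_left (le_of_lt hrY)]
  · -- RR_TU = rT
    have e0 : pUgT P true 0 / pUgT P false 0 = 1/κ := by
      rw [hUgT1, hUgT0, hB0, hA0, mul_comm, div_mul_eq_div_div, div_self (ne_of_gt hw0)]
    have e1 : pUgT P true 1 / pUgT P false 1 = 1/κ := by
      rw [hUgT1, hUgT0, hB1, hA1, mul_comm, div_mul_eq_div_div, div_self (ne_of_gt hw1)]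
    have e2 : pUgT P true 2 / pUgT P false 2 = rT := by
      rw [hUgT1, hUgT0, hB2, hA2]
      field_simp
    have hκr : 1/κ ≤ rT := by
      rw [div_le_iff₀ hκ0, mul_comm]
      linarith [hκrT]
    rw [sup3]
    simp only [e0, e1, e2]
    rw [max_self, max_eq_right hκr]
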